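/- Let G = (V,E) be a simple graph and P = {x : E → ℝ : x ≥ 0 and ∑_{e ∈ E(G[U])} x(e) ≤ |U| − 1 for all nonempty U ⊆ V} the maximum weight forest polytope. Then for every extreme point x = X(F) of P (F a forest in G), there is a circuit walk of at most 5 maximal steps from the zero vector to x using only 0/±1 circuits of (Rank), with every intermediate point an extreme point of P; consequently the circuit diameter of P is at most 9 (and at most 6 when |V| ≤ 4). -/

import Mathlib

set_option linter.unusedSectionVars false
set_option maxHeartbeats 1000000


/-- The row of the rank-inequality matrix indexed by `U ⊆ V`, applied to `g`:
`∑_{e ∈ E(G[U])} g(e)`. -/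
def rowSum {V : Type*} [Fintype V] [DecidableEq V] (G : SimpleGraph V) [DecidableRel G.Adj]
    (g : G.edgeSet → ℝ) (U : Finset V) : ℝ :=
  ∑ e : G.edgeSet, if ∀ v ∈ (e : Sym2 V), v ∈ U then g e else 0

/-- The support of `B g` for the rank-inequality matrix `B`: the nonempty sets `U` whose
rank row evaluates to a nonzero value on `g`. -/
def Bsupp {V : Type*} [Fintype V] [DecidableEq V] (G : SimpleGraph V) [DecidableRel G.Adj]
    (g : G.edgeSet → ℝ) : Set (Finset V) :=
  {U | U.Nonempty ∧ rowSum G g U ≠ 0}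

/-- A circuit of the rank-inequality system: a nonzero vector `g` such that `B g` is
support-minimal over `{B x : x ≠ 0}`. -/
def IsCircuit {V : Type*} [Fintype V] [DecidableEq V] (G : SimpleGraph V) [DecidableRel G.Adj]
    (g : G.edgeSet → ℝ) : Prop :=
  g ≠ 0 ∧ ∀ y : G.edgeSet → ℝ, y ≠ 0 → ¬ Bsupp G y ⊂ Bsupp G g

/-- The unit vector supported on the edge `e`. -/
def unitVec {V : Type*} [DecidableEq V] (G : SimpleGraph V) (e : G.edgeSet) :
    G.edgeSet → ℝ :=
  fun f => if f = e then 1 else 0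

/-- The spanning subgraph of `G` with edge set `R`. -/
def edgeSub {V : Type*} (G : SimpleGraph V) (R : Set G.edgeSet) : SimpleGraph V where
  Adj u v := u ≠ v ∧ ∃ e ∈ R, (e : Sym2 V) = s(u, v)
  symm := ⟨by
    rintro u v ⟨huv, e, heR, he⟩
    exact ⟨huv.symm, e, heR, by rw [he, Sym2.eq_swap]⟩⟩
  loopless := ⟨by rintro v ⟨hv, _⟩; exact hv rfl⟩

/-- The maximum weight forest polytope of `G`. -/
def MWF {V : Type*} [Fintype V] [DecidableEq V] (G : SimpleGraph V) [DecidableRel G.Adj] :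
    Set (G.edgeSet → ℝ) :=
  {x | (∀ e, 0 ≤ x e) ∧ ∀ U : Finset V, U.Nonempty → rowSum G x U ≤ (U.card : ℝ) - 1}

/-- The characteristic vector of an edge set `F`. -/
def chiVec {V : Type*} [DecidableEq V] (G : SimpleGraph V) (F : Finset G.edgeSet) :
    G.edgeSet → ℝ :=
  fun e => if e ∈ F then 1 else 0

/-- A maximal step of a circuit walk in the maximum weight forest polytope: move from
`x` to `x'` along a circuit direction with a maximal feasible step length. -/
def IsMaxStep {V : Type*} [Fintype V] [DecidableEq V] (G : SimpleGraph V)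
    [DecidableRel G.Adj] (x x' : G.edgeSet → ℝ) : Prop :=
  ∃ (gdir : G.edgeSet → ℝ) (eps : ℝ), IsCircuit G gdir ∧ 0 < eps ∧
    x' = x + eps • gdir ∧ ∀ eps' : ℝ, eps < eps' → x + eps' • gdir ∉ MWF G

/-- A maximal circuit step whose direction is moreover a 0/±1 circuit. -/
def IsMaxStep01 {V : Type*} [Fintype V] [DecidableEq V] (G : SimpleGraph V)
    [DecidableRel G.Adj] (x x' : G.edgeSet → ℝ) : Prop :=
  ∃ (gdir : G.edgeSet → ℝ) (eps : ℝ), IsCircuit G gdir ∧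
    (∀ e, gdir e = 0 ∨ gdir e = 1 ∨ gdir e = -1) ∧ 0 < eps ∧
    x' = x + eps • gdir ∧ ∀ eps' : ℝ, eps < eps' → x + eps' • gdir ∉ MWF G

/-- A circuit walk in the maximum weight forest polytope. -/
def IsCircuitWalk {V : Type*} [Fintype V] [DecidableEq V] (G : SimpleGraph V)
    [DecidableRel G.Adj] (k : ℕ) (x : Fin (k + 1) → G.edgeSet → ℝ) : Prop :=
  (∀ i, x i ∈ MWF G) ∧ ∀ i : Fin k, IsMaxStep G (x i.castSucc) (x i.succ)

section Basic
variable {V : Type*} [Fintype V] [DecidableEq V] {G : SimpleGraph V} [DecidableRel G.Adj]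

lemma edge_repr (e : G.edgeSet) : ∃ u v, G.Adj u v ∧ (e : Sym2 V) = s(u, v) := by
  obtain ⟨s, hs⟩ := e
  induction s using Sym2.ind with
  | _ u v => exact ⟨u, v, hs, rfl⟩

lemma rowSum_add (x y : G.edgeSet → ℝ) (U : Finset V) :
    rowSum G (x + y) U = rowSum G x U + rowSum G y U := by
  unfold rowSum
  rw [← Finset.sum_add_distrib]
  refine Finset.sum_congr rfl fun e _ => ?_
  split <;> simp

lemma rowSum_smul (c : ℝ) (x : G.edgeSet → ℝ) (U : Finset V) :
    rowSum G (c • x) U = c * rowSum G x U := by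
  unfold rowSum
  rw [Finset.mul_sum]
  refine Finset.sum_congr rfl fun e _ => ?_
  split <;> simp

lemma rowSum_neg (x : G.edgeSet → ℝ) (U : Finset V) :
    rowSum G (-x) U = - rowSum G x U := by
  have := rowSum_smul (-1 : ℝ) x U
  simpa using this

lemma rowSum_sub (x y : G.edgeSet → ℝ) (U : Finset V) :
    rowSum G (x - y) U = rowSum G x U - rowSum G y U := by
  have := rowSum_add x (-y) U
  simp [rowSum_neg] at this
  simpa [sub_eq_add_neg] using this

lemma rowSum_pair {u v : V} (huv : u ≠ v) (e : G.edgeSet) (he : (e : Sym2 V) = s(u, v))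
    (x : G.edgeSet → ℝ) : rowSum G x ({u, v} : Finset V) = x e := by
  unfold rowSum
  rw [Finset.sum_eq_single_of_mem e (Finset.mem_univ e) (fun f _ hf => ?_)]
  · have : ∀ w ∈ (e : Sym2 V), w ∈ ({u, v} : Finset V) := by
      intro w hw
      rw [he, Sym2.mem_iff] at hw
      rcases hw with h | h <;> simp [h]
    rw [if_pos this]
  · rw [if_neg]
    intro hall
    obtain ⟨a, b, hab, hfab⟩ := edge_repr f
    have ha : a ∈ ({u, v} : Finset V) := hall a (by rw [hfab]; exact Sym2.mem_mk_left a b)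
    have hb : b ∈ ({u, v} : Finset V) := hall b (by rw [hfab]; exact Sym2.mem_mk_right a b)
    simp only [Finset.mem_insert, Finset.mem_singleton] at ha hb
    have hne : a ≠ b := hab.ne
    apply hf
    apply Subtype.ext
    rw [hfab, he, Sym2.eq_iff]
    rcases ha with rfl | rfl <;> rcases hb with h | h <;> tauto

lemma mem_MWF_le_one {x : G.edgeSet → ℝ} (hx : x ∈ MWF G) (e : G.edgeSet) : x e ≤ 1 := by
  obtain ⟨u, v, hadj, he⟩ := edge_repr e
  have h := hx.2 {u, v} ⟨u, by simp⟩
  rw [rowSum_pair hadj.ne e he, Finset.card_pair hadj.ne] at h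
  norm_num at h
  exact h

lemma chiVec_mono_mem {F F' : Finset G.edgeSet} (hsub : F' ⊆ F)
    (hF : chiVec G F ∈ MWF G) : chiVec G F' ∈ MWF G := by
  constructor
  · intro e; unfold chiVec; split <;> norm_num
  · intro U hU
    refine le_trans ?_ (hF.2 U hU)
    unfold rowSum
    refine Finset.sum_le_sum fun e _ => ?_
    by_cases h : ∀ v ∈ (e : Sym2 V), v ∈ U
    · rw [if_pos h, if_pos h]
      unfold chiVec
      by_cases h' : e ∈ F'
      · simp [h', hsub h']
      · simp only [if_neg h']; split <;> norm_num
    · rw [if_neg h, if_neg h]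

end Basic
section Circuits
variable {V : Type*} [Fintype V] [DecidableEq V] {G : SimpleGraph V} [DecidableRel G.Adj]

lemma rowSum_chi (S : Finset G.edgeSet) (U : Finset V) :
    rowSum G (chiVec G S) U = ∑ f ∈ S, (if ∀ v ∈ (f : Sym2 V), v ∈ U then (1 : ℝ) else 0) := by
  unfold rowSum
  rw [← Finset.sum_subset (Finset.subset_univ S) (fun x _ hx => by
    by_cases h : ∀ v ∈ (x : Sym2 V), v ∈ U <;> simp [chiVec, h, hx])]
  exact Finset.sum_congr rfl fun f hf => by
    by_cases h : ∀ v ∈ (f : Sym2 V), v ∈ U <;> simp [chiVec, h, hf]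

lemma rowSum_unit (e : G.edgeSet) (U : Finset V) :
    rowSum G (unitVec G e) U = if ∀ v ∈ (e : Sym2 V), v ∈ U then (1 : ℝ) else 0 := by
  unfold rowSum
  rw [Finset.sum_eq_single_of_mem e (Finset.mem_univ e) (fun f _ hf => by
    by_cases h : ∀ v ∈ (f : Sym2 V), v ∈ U <;> simp [unitVec, h, hf])]
  by_cases h : ∀ v ∈ (e : Sym2 V), v ∈ U <;> simp [unitVec, h]

lemma Bsupp_smul {c : ℝ} (hc : c ≠ 0) (y : G.edgeSet → ℝ) :
    Bsupp G (c • y) = Bsupp G y := by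
  ext U
  simp [Bsupp, rowSum_smul, hc]

lemma nonempty_of_edge_mem (e : G.edgeSet) {U : Finset V}
    (h : ∀ v ∈ (e : Sym2 V), v ∈ U) : U.Nonempty := by
  obtain ⟨a, b, hab, he⟩ := edge_repr e
  exact ⟨a, h a (by rw [he]; exact Sym2.mem_mk_left a b)⟩

lemma supp_subset_of_Bsupp_subset {y g : G.edgeSet → ℝ}
    (hsub : Bsupp G y ⊆ Bsupp G g) {f : G.edgeSet} (hf : y f ≠ 0) : g f ≠ 0 := by
  obtain ⟨a, b, hab, hfab⟩ := edge_repr f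
  have hU : ({a, b} : Finset V) ∈ Bsupp G y :=
    ⟨⟨a, by simp⟩, by rw [rowSum_pair hab.ne f hfab]; exact hf⟩
  have := (hsub hU).2
  rwa [rowSum_pair hab.ne f hfab] at this

lemma isCircuit_unitVec (e : G.edgeSet) : IsCircuit G (unitVec G e) := by
  constructor
  · intro h
    have := congrFun h e
    simp [unitVec] at this
  · intro y hy hss
    have hsupp : ∀ f, y f ≠ 0 → f = e := by
      intro f hf
      have := supp_subset_of_Bsupp_subset hss.subset hf
      simp only [unitVec, ne_eq, ite_eq_right_iff, Classical.not_imp] at this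
      exact this.1
    have hyeq : y = (y e) • unitVec G e := by
      funext f
      by_cases h : f = e
      · subst h; simp [unitVec]
      · have : y f = 0 := by
          by_contra hne
          exact h (hsupp f hne)
        simp [unitVec, h, this]
    have hye : y e ≠ 0 := by
      intro h0
      apply hy
      rw [hyeq, h0, zero_smul]
    rw [hyeq, Bsupp_smul hye] at hss
    exact (ssubset_irrefl _) hss

lemma isCircuit_chi_sub_unit (e : G.edgeSet) (S : Finset G.edgeSet) (he : e ∉ S)
    (H : ∀ f ∈ S, ∃ U : Finset V, (∀ v ∈ (e : Sym2 V), v ∈ U) ∧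
        (∀ f' ∈ S, (∀ v ∈ (f' : Sym2 V), v ∈ U) ↔ f' = f)) :
    IsCircuit G (chiVec G S - unitVec G e) := by
  set g := chiVec G S - unitVec G e with hg
  have hge : g e = -1 := by simp [hg, chiVec, unitVec, he]
  have hgS : ∀ f ∈ S, g f = 1 := by
    intro f hf
    have hfe : f ≠ e := fun h => he (h ▸ hf)
    simp [hg, chiVec, unitVec, hf, hfe]
  have hg0 : ∀ f, f ∉ S → f ≠ e → g f = 0 := by
    intro f hf hfe
    simp [hg, chiVec, unitVec, hf, hfe]
  constructor
  · intro h
    have := congrFun h e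
    rw [hge] at this
    norm_num at this
  · intro y hy hss
    have hsupp : ∀ f, y f ≠ 0 → f ∈ S ∨ f = e := by
      intro f hf
      have := supp_subset_of_Bsupp_subset hss.subset hf
      by_contra hcon
      push_neg at hcon
      exact this (hg0 f hcon.1 hcon.2)
    have key : ∀ f ∈ S, y f = - y e := by
      intro f hf
      obtain ⟨U, heU, hiff⟩ := H f hf
      have hUne : U.Nonempty := nonempty_of_edge_mem e heU
      have hrg : rowSum G g U = 0 := by
        rw [hg, rowSum_sub, rowSum_chi, rowSum_unit, if_pos heU]
        rw [Finset.sum_congr rfl (fun f' hf' => by rw [if_congr (hiff f' hf') rfl rfl])]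
        rw [Finset.sum_ite_eq' S f (fun _ => (1 : ℝ)), if_pos hf]
        ring
      have hUy : U ∉ Bsupp G y := by
        intro hmem
        exact (hss.subset hmem).2 hrg
      have hry : rowSum G y U = 0 := by
        by_contra hne
        exact hUy ⟨hUne, hne⟩
      have hfe : f ≠ e := fun h => he (h ▸ hf)
      have hsum : rowSum G y U = y e + y f := by
        unfold rowSum
        have hterm : ∀ f' : G.edgeSet,
            (if ∀ v ∈ (f' : Sym2 V), v ∈ U then y f' else 0) =
            (if f' = e then y e else 0) + (if f' = f then y f else 0) := by
          intro f'
          by_cases h1 : f' = e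
          · subst h1
            rw [if_pos heU, if_pos rfl, if_neg (Ne.symm hfe), add_zero]
          · by_cases h2 : f' = f
            · subst h2
              rw [if_pos ((hiff f' hf).mpr rfl), if_neg h1, if_pos rfl, zero_add]
            · rw [if_neg h1, if_neg h2, add_zero]
              by_cases h3 : y f' = 0
              · simp [h3]
              · rcases hsupp f' h3 with hS | hE
                · rw [if_neg]
                  intro hIn
                  exact h2 ((hiff f' hS).mp hIn)
                · exact absurd hE h1
        rw [Finset.sum_congr rfl (fun f' _ => hterm f'), Finset.sum_add_distrib,
          Finset.sum_ite_eq' Finset.univ e (fun _ => y e),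
          Finset.sum_ite_eq' Finset.univ f (fun _ => y f),
          if_pos (Finset.mem_univ e), if_pos (Finset.mem_univ f)]
      rw [hsum] at hry
      linarith
    have hyeq : y = (-(y e)) • g := by
      funext f
      by_cases h1 : f = e
      · subst h1; rw [Pi.smul_apply, hge]; simp
      · by_cases h2 : f ∈ S
        · rw [Pi.smul_apply, hgS f h2, key f h2]; simp
        · have : y f = 0 := by
            by_contra hne
            rcases hsupp f hne with h | h
            exacts [h2 h, h1 h]
          rw [Pi.smul_apply, hg0 f h2 h1, this]; simp
    have hye : -(y e) ≠ 0 := by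
      intro h0
      apply hy
      rw [hyeq, h0, zero_smul]
    rw [hyeq, Bsupp_smul hye] at hss
    exact (ssubset_irrefl _) hss

lemma Bsupp_neg (g : G.edgeSet → ℝ) : Bsupp G (-g) = Bsupp G g := by
  have : -g = (-1 : ℝ) • g := by funext f; simp
  rw [this, Bsupp_smul (by norm_num)]

lemma IsCircuit.neg {g : G.edgeSet → ℝ} (h : IsCircuit G g) : IsCircuit G (-g) := by
  refine ⟨fun h0 => h.1 ?_, fun y hy hss => h.2 y hy (by rwa [Bsupp_neg g] at hss)⟩
  have := congrFun h0
  funext f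
  have hf := this f
  simp only [Pi.neg_apply, Pi.zero_apply, neg_eq_zero] at hf
  exact hf

end Circuits
section Extreme
variable {V : Type*} [Fintype V] [DecidableEq V] {G : SimpleGraph V} [DecidableRel G.Adj]

lemma rowSum_zero (U : Finset V) : rowSum G (0 : G.edgeSet → ℝ) U = 0 := by
  unfold rowSum
  refine Finset.sum_eq_zero fun e _ => ?_
  split <;> simp

lemma zero_mem_MWF : (0 : G.edgeSet → ℝ) ∈ MWF G := by
  refine ⟨fun e => le_refl 0, fun U hU => ?_⟩
  rw [rowSum_zero]
  have : (1 : ℝ) ≤ U.card := by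
    have := Finset.card_pos.mpr hU
    exact_mod_cast this
  linarith

lemma extreme_of_01 {z : G.edgeSet → ℝ} (hz : z ∈ MWF G)
    (h01 : ∀ e, z e = 0 ∨ z e = 1) : z ∈ Set.extremePoints ℝ (MWF G) := by
  rw [mem_extremePoints]
  refine ⟨hz, fun x1 hx1 x2 hx2 hseg => ?_⟩
  obtain ⟨a, b, ha, hb, hab, heq⟩ := hseg
  have key : ∀ e, x1 e = z e ∧ x2 e = z e := by
    intro e
    have h1 := congrFun heq e
    simp only [Pi.add_apply, Pi.smul_apply, smul_eq_mul] at h1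
    have hl1 : 0 ≤ x1 e := hx1.1 e
    have hl2 : 0 ≤ x2 e := hx2.1 e
    have hu1 : x1 e ≤ 1 := mem_MWF_le_one hx1 e
    have hu2 : x2 e ≤ 1 := mem_MWF_le_one hx2 e
    rcases h01 e with h | h <;> rw [h] at h1 <;> constructor <;> rw [h] <;> nlinarith
  exact ⟨funext fun e => (key e).1, funext fun e => (key e).2⟩

lemma chiVec_extreme {F : Finset G.edgeSet} (h : chiVec G F ∈ MWF G) :
    chiVec G F ∈ Set.extremePoints ℝ (MWF G) := by
  refine extreme_of_01 h fun e => ?_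
  unfold chiVec
  split <;> simp

lemma chiVec_empty : chiVec G (∅ : Finset G.edgeSet) = 0 := by
  funext e; simp [chiVec]

end Extreme

section Steps
variable {V : Type*} [Fintype V] [DecidableEq V] {G : SimpleGraph V} [DecidableRel G.Adj]

lemma IsMaxStep01.toMaxStep {x x' : G.edgeSet → ℝ} (h : IsMaxStep01 G x x') :
    IsMaxStep G x x' := by
  obtain ⟨g, eps, hc, _, hpos, heq, hmax⟩ := h
  exact ⟨g, eps, hc, hpos, heq, hmax⟩

lemma not_mem_MWF_of_neg {x : G.edgeSet → ℝ} (e : G.edgeSet) (h : x e < 0) :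
    x ∉ MWF G := fun hm => absurd (hm.1 e) (not_le.mpr h)

lemma not_mem_MWF_of_gt_one {x : G.edgeSet → ℝ} (e : G.edgeSet) (h : 1 < x e) :
    x ∉ MWF G := by
  intro hm
  exact absurd (mem_MWF_le_one hm e) (not_le.mpr h)

lemma step_add (A : Finset G.edgeSet) (e : G.edgeSet) (he : e ∉ A) :
    IsMaxStep01 G (chiVec G A) (chiVec G (insert e A)) := by
  refine ⟨unitVec G e, 1, isCircuit_unitVec e, ?_, one_pos, ?_, ?_⟩
  · intro f; unfold unitVec; split <;> simp
  · funext f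
    simp only [Pi.add_apply, Pi.smul_apply, smul_eq_mul, one_mul, chiVec, unitVec]
    by_cases hf : f = e
    · subst hf; simp [he]
    · simp [hf, Finset.mem_insert]
  · intro eps' h1
    apply not_mem_MWF_of_gt_one e
    simp only [Pi.add_apply, Pi.smul_apply, smul_eq_mul, chiVec, unitVec, if_pos rfl,
      if_neg he, mul_one]
    norm_num
    linarith

lemma step_exchange (e : G.edgeSet) (A S : Finset G.edgeSet) (heA : e ∉ A) (heS : e ∉ S)
    (hdisj : ∀ f ∈ S, f ∉ A)
    (H : ∀ f ∈ S, ∃ U : Finset V, (∀ v ∈ (e : Sym2 V), v ∈ U) ∧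
        (∀ f' ∈ S, (∀ v ∈ (f' : Sym2 V), v ∈ U) ↔ f' = f)) :
    IsMaxStep01 G (chiVec G (insert e A)) (chiVec G (A ∪ S)) := by
  refine ⟨chiVec G S - unitVec G e, 1, isCircuit_chi_sub_unit e S heS H, ?_, one_pos, ?_, ?_⟩
  · intro f
    simp only [Pi.sub_apply, chiVec, unitVec]
    by_cases hf : f = e
    · subst hf; simp [heS]
    · by_cases hfS : f ∈ S <;> simp [hf, hfS]
  · funext f
    simp only [Pi.add_apply, Pi.smul_apply, Pi.sub_apply, smul_eq_mul, one_mul, chiVec,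
      unitVec, Finset.mem_union, Finset.mem_insert]
    by_cases hf : f = e
    · subst hf; simp [heA, heS]
    · by_cases hfS : f ∈ S
      · simp [hf, hfS, hdisj f hfS]
      · by_cases hfA : f ∈ A <;> simp [hf, hfS, hfA]
  · intro eps' h1
    apply not_mem_MWF_of_neg e
    simp only [Pi.add_apply, Pi.smul_apply, Pi.sub_apply, smul_eq_mul, chiVec, unitVec,
      if_pos rfl, if_neg heS, Finset.mem_insert]
    norm_num
    linarith

lemma rev_add (A : Finset G.edgeSet) (e : G.edgeSet) (he : e ∉ A) :
    IsMaxStep G (chiVec G (insert e A)) (chiVec G A) := by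
  refine ⟨-unitVec G e, 1, (isCircuit_unitVec e).neg, one_pos, ?_, ?_⟩
  · funext f
    simp only [Pi.add_apply, Pi.smul_apply, Pi.neg_apply, smul_eq_mul, chiVec, unitVec]
    by_cases hf : f = e
    · subst hf; simp [he]
    · simp [hf, Finset.mem_insert]
  · intro eps' h1
    apply not_mem_MWF_of_neg e
    simp only [Pi.add_apply, Pi.smul_apply, Pi.neg_apply, smul_eq_mul, chiVec, unitVec,
      if_pos rfl, Finset.mem_insert, mul_one]
    norm_num
    linarith

lemma rev_exchange (e : G.edgeSet) (A S : Finset G.edgeSet) (heA : e ∉ A) (heS : e ∉ S)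
    (hdisj : ∀ f ∈ S, f ∉ A)
    (H : ∀ f ∈ S, ∃ U : Finset V, (∀ v ∈ (e : Sym2 V), v ∈ U) ∧
        (∀ f' ∈ S, (∀ v ∈ (f' : Sym2 V), v ∈ U) ↔ f' = f)) :
    IsMaxStep G (chiVec G (A ∪ S)) (chiVec G (insert e A)) := by
  have hstep : chiVec G (insert e A) = chiVec G (A ∪ S) +
      (1 : ℝ) • (unitVec G e - chiVec G S) := by
    funext f
    simp only [Pi.add_apply, Pi.smul_apply, Pi.sub_apply, smul_eq_mul, one_mul, chiVec,
      unitVec, Finset.mem_union, Finset.mem_insert]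
    by_cases hf : f = e
    · subst hf; simp [heA, heS]
    · by_cases hfS : f ∈ S
      · simp [hf, hfS, hdisj f hfS]
      · by_cases hfA : f ∈ A <;> simp [hf, hfS, hfA]
  have hcirc : IsCircuit G (unitVec G e - chiVec G S) := by
    have := (isCircuit_chi_sub_unit e S heS H).neg
    have heq : -(chiVec G S - unitVec G e) = unitVec G e - chiVec G S := by
      funext f; simp
    rwa [heq] at this
  refine ⟨unitVec G e - chiVec G S, 1, hcirc, one_pos, hstep, ?_⟩
  intro eps' h1
  rcases S.eq_empty_or_nonempty with rfl | ⟨f, hf⟩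
  · apply not_mem_MWF_of_gt_one e
    simp only [Pi.add_apply, Pi.smul_apply, Pi.sub_apply, smul_eq_mul, chiVec, unitVec,
      if_pos rfl, Finset.union_empty, Finset.notMem_empty, if_neg heA]
    norm_num
    linarith
  · apply not_mem_MWF_of_neg f
    have hfe : f ≠ e := fun h => heS (h ▸ hf)
    simp only [Pi.add_apply, Pi.smul_apply, Pi.sub_apply, smul_eq_mul, chiVec, unitVec,
      if_neg hfe, if_pos hf, Finset.mem_union]
    simp only [hf, or_true, if_true]
    linarith

end Steps
section Hyps
variable {V : Type*} [Fintype V] [DecidableEq V] {G : SimpleGraph V} [DecidableRel G.Adj]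

lemma edge_repr_mem (e : G.edgeSet) {p : V} (hp : p ∈ (e : Sym2 V)) :
    ∃ q, p ≠ q ∧ (e : Sym2 V) = s(p, q) := by
  obtain ⟨a, b, hab, he⟩ := edge_repr e
  rw [he, Sym2.mem_iff] at hp
  rcases hp with rfl | rfl
  · exact ⟨b, hab.ne, he⟩
  · exact ⟨a, hab.ne', by rw [he, Sym2.eq_swap]⟩

lemma no_triangle {F : Finset G.edgeSet} (hF : chiVec G F ∈ MWF G) {e f g : G.edgeSet}
    (heF : e ∈ F) (hfF : f ∈ F) (hgF : g ∈ F) (hef : e ≠ f) (heg : e ≠ g) (hfg : f ≠ g)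
    {u v w : V} (huv : u ≠ v) (huw : u ≠ w) (hvw : v ≠ w)
    (he : (e : Sym2 V) = s(u, v)) (hf : (f : Sym2 V) = s(v, w))
    (hg : (g : Sym2 V) = s(u, w)) : False := by
  have hU : ({u, v, w} : Finset V).card = 3 := by
    rw [Finset.card_insert_of_notMem (by simp [huv, huw]),
      Finset.card_insert_of_notMem (by simp [hvw]), Finset.card_singleton]
  have hin : ∀ (x : G.edgeSet) (a b : V), (x : Sym2 V) = s(a, b) →
      a ∈ ({u, v, w} : Finset V) → b ∈ ({u, v, w} : Finset V) →
      (if ∀ z ∈ (x : Sym2 V), z ∈ ({u, v, w} : Finset V) then (1 : ℝ) else 0) = 1 := by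
    intro x a b hx ha hb
    rw [if_pos]
    intro z hz
    rw [hx, Sym2.mem_iff] at hz
    rcases hz with rfl | rfl <;> assumption
  have h3 : (3 : ℝ) ≤ rowSum G (chiVec G F) {u, v, w} := by
    rw [rowSum_chi]
    have hsub : ({e, f, g} : Finset G.edgeSet) ⊆ F := by
      intro x hx
      simp only [Finset.mem_insert, Finset.mem_singleton] at hx
      rcases hx with rfl | rfl | rfl <;> assumption
    refine le_trans ?_ (Finset.sum_le_sum_of_subset_of_nonneg hsub
      (fun _ _ _ => by split <;> norm_num))
    rw [Finset.sum_insert (by simp [hef, heg]), Finset.sum_insert (by simp [hfg]),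
      Finset.sum_singleton]
    rw [hin e u v he (by simp) (by simp), hin f v w hf (by simp) (by simp),
      hin g u w hg (by simp) (by simp)]
    norm_num
  have hle := hF.2 {u, v, w} ⟨u, by simp⟩
  rw [hU] at hle
  norm_num at hle
  linarith

lemma H_adjacent {F : Finset G.edgeSet} (hF : chiVec G F ∈ MWF G) (e : G.edgeSet)
    (heF : e ∈ F) (S1 : Finset G.edgeSet)
    (hS1 : ∀ f ∈ S1, f ∈ F ∧ f ≠ e ∧ ∃ p, p ∈ (f : Sym2 V) ∧ p ∈ (e : Sym2 V)) :
    ∀ f ∈ S1, ∃ U : Finset V, (∀ v ∈ (e : Sym2 V), v ∈ U) ∧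
      (∀ f' ∈ S1, (∀ v ∈ (f' : Sym2 V), v ∈ U) ↔ f' = f) := by
  intro f hf
  obtain ⟨hfF, hfe, p, hpf, hpe⟩ := hS1 f hf
  obtain ⟨q, hpq, he⟩ := edge_repr_mem e hpe
  obtain ⟨r, hpr, hfr⟩ := edge_repr_mem f hpf
  have hqr : q ≠ r := by
    rintro rfl
    exact hfe (Subtype.ext (by rw [hfr, he]))
  refine ⟨{p, q, r}, ?_, ?_⟩
  · intro z hz
    rw [he, Sym2.mem_iff] at hz
    rcases hz with rfl | rfl <;> simp
  · intro f' hf'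
    obtain ⟨hf'F, hf'e, _⟩ := hS1 f' hf'
    constructor
    · intro hIn
      obtain ⟨x, y, hxy, hf'xy⟩ := edge_repr f'
      have hx : x ∈ ({p, q, r} : Finset V) := hIn x (by rw [hf'xy]; exact Sym2.mem_mk_left x y)
      have hy : y ∈ ({p, q, r} : Finset V) := hIn y (by rw [hf'xy]; exact Sym2.mem_mk_right x y)
      simp only [Finset.mem_insert, Finset.mem_singleton] at hx hy
      have hxyne : x ≠ y := hxy.ne
      have henum : (f' : Sym2 V) = s(p, q) ∨ (f' : Sym2 V) = s(p, r) ∨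
          (f' : Sym2 V) = s(q, r) := by
        rw [hf'xy]
        rcases hx with rfl | rfl | rfl <;> rcases hy with rfl | rfl | rfl <;>
          first
            | exact absurd rfl hxyne
            | simp [Sym2.eq_iff]
            | (rw [Sym2.eq_swap]; simp [Sym2.eq_iff])
      rcases henum with h | h | h
      · exact absurd (Subtype.ext (by rw [h, he])) hf'e
      · exact Subtype.ext (by rw [h, hfr])
      · exfalso
        have hff' : f ≠ f' := by
          rintro rfl
          rw [hfr, Sym2.eq_iff] at h
          rcases h with ⟨rfl, _⟩ | ⟨rfl, _⟩
          · exact hpq rfl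
          · exact hpr rfl
        have hef' : e ≠ f' := by
          rintro rfl
          rw [he, Sym2.eq_iff] at h
          rcases h with ⟨rfl, _⟩ | ⟨h1, _⟩
          · exact hpq rfl
          · exact hpr h1
        exact no_triangle hF heF hf'F hfF hef' (Ne.symm hfe) (Ne.symm hff') hpq hpr hqr
          he h hfr
    · rintro rfl
      intro z hz
      rw [hfr, Sym2.mem_iff] at hz
      rcases hz with rfl | rfl <;> simp

lemma H_disjoint (e : G.edgeSet) (S2 : Finset G.edgeSet)
    (hS2 : ∀ f ∈ S2, ¬ ∃ p, p ∈ (f : Sym2 V) ∧ p ∈ (e : Sym2 V)) :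
    ∀ f ∈ S2, ∃ U : Finset V, (∀ v ∈ (e : Sym2 V), v ∈ U) ∧
      (∀ f' ∈ S2, (∀ v ∈ (f' : Sym2 V), v ∈ U) ↔ f' = f) := by
  intro f hf
  obtain ⟨u, v, huv, he⟩ := edge_repr e
  obtain ⟨a, b, hab, hfab⟩ := edge_repr f
  refine ⟨{u, v, a, b}, ?_, ?_⟩
  · intro z hz
    rw [he, Sym2.mem_iff] at hz
    rcases hz with rfl | rfl <;> simp
  · intro f' hf'
    constructor
    · intro hIn
      obtain ⟨x, y, hxy, hf'xy⟩ := edge_repr f'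
      have hxm : x ∈ ({u, v, a, b} : Finset V) :=
        hIn x (by rw [hf'xy]; exact Sym2.mem_mk_left x y)
      have hym : y ∈ ({u, v, a, b} : Finset V) :=
        hIn y (by rw [hf'xy]; exact Sym2.mem_mk_right x y)
      have hnx : x ≠ u ∧ x ≠ v ∧ y ≠ u ∧ y ≠ v := by
        refine ⟨?_, ?_, ?_, ?_⟩ <;> rintro rfl <;> apply hS2 f' hf'
        · exact ⟨x, by rw [hf'xy]; exact Sym2.mem_mk_left x y, by rw [he]; simp⟩
        · exact ⟨x, by rw [hf'xy]; exact Sym2.mem_mk_left x y, by rw [he]; simp⟩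
        · exact ⟨y, by rw [hf'xy]; exact Sym2.mem_mk_right x y, by rw [he]; simp⟩
        · exact ⟨y, by rw [hf'xy]; exact Sym2.mem_mk_right x y, by rw [he]; simp⟩
      simp only [Finset.mem_insert, Finset.mem_singleton] at hxm hym
      have hx : x = a ∨ x = b := by tauto
      have hy : y = a ∨ y = b := by tauto
      apply Subtype.ext
      rw [hf'xy, hfab]
      rcases hx with rfl | rfl <;> rcases hy with rfl | rfl
      · exact absurd rfl hxy.ne
      · rfl
      · exact Sym2.eq_swap
      · exact absurd rfl hxy.ne
    · rintro rfl
      intro z hz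
      rw [hfab, Sym2.mem_iff] at hz
      rcases hz with rfl | rfl <;> simp

lemma H_singleton (e f : G.edgeSet) :
    ∀ f0 ∈ ({f} : Finset G.edgeSet), ∃ U : Finset V, (∀ v ∈ (e : Sym2 V), v ∈ U) ∧
      (∀ f' ∈ ({f} : Finset G.edgeSet), (∀ v ∈ (f' : Sym2 V), v ∈ U) ↔ f' = f0) := by
  intro f0 hf0
  rw [Finset.mem_singleton] at hf0
  subst hf0
  obtain ⟨u, v, huv, he⟩ := edge_repr e
  obtain ⟨a, b, hab, hfab⟩ := edge_repr f0
  refine ⟨{u, v, a, b}, ?_, ?_⟩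
  · intro z hz
    rw [he, Sym2.mem_iff] at hz
    rcases hz with rfl | rfl <;> simp
  · intro f' hf'
    rw [Finset.mem_singleton] at hf'
    subst hf'
    simp only [iff_true]
    intro z hz
    rw [hfab, Sym2.mem_iff] at hz
    rcases hz with rfl | rfl <;> simp

end Hyps
section Integrality
variable {V : Type*} [Fintype V] [DecidableEq V] {G : SimpleGraph V} [DecidableRel G.Adj]

lemma perturb {x : G.edgeSet → ℝ} (hx : x ∈ Set.extremePoints ℝ (MWF G))
    (d : G.edgeSet → ℝ) (hd0 : ∀ e, x e = 0 → d e = 0)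
    (hdt : ∀ U : Finset V, U.Nonempty → rowSum G x U = (U.card : ℝ) - 1 →
      rowSum G d U = 0) : d = 0 := by
  classical
  by_contra hd
  have hxm : x ∈ MWF G := hx.1
  obtain ⟨e0, he0⟩ : ∃ e, d e ≠ 0 := by
    by_contra h
    push_neg at h
    exact hd (funext h)
  set f1 : G.edgeSet → ℝ := fun e => if d e = 0 then 1 else x e / |d e| with hf1
  set f2 : Finset V → ℝ := fun U =>
    if rowSum G d U = 0 ∨ ¬U.Nonempty ∨ rowSum G x U = (U.card : ℝ) - 1 then 1
    else ((U.card : ℝ) - 1 - rowSum G x U) / |rowSum G d U| with hf2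
  have hne1 : (Finset.univ : Finset G.edgeSet).Nonempty := ⟨e0, Finset.mem_univ e0⟩
  have hne2 : (Finset.univ : Finset (Finset V)).Nonempty := ⟨∅, Finset.mem_univ ∅⟩
  set eps := min (Finset.univ.inf' hne1 f1) (Finset.univ.inf' hne2 f2) with heps
  have hepspos : 0 < eps := by
    rw [heps, lt_min_iff]
    constructor
    · rw [Finset.lt_inf'_iff]
      intro e _
      show (0:ℝ) < if d e = 0 then 1 else x e / |d e|
      by_cases h : d e = 0
      · simp [h]
      · rw [if_neg h]
        have hxe : 0 < x e := by
          rcases lt_or_eq_of_le (hxm.1 e) with h' | h'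
          · exact h'
          · exact absurd (hd0 e h'.symm) h
        exact div_pos hxe (abs_pos.mpr h)
    · rw [Finset.lt_inf'_iff]
      intro U _
      show (0:ℝ) < if rowSum G d U = 0 ∨ ¬U.Nonempty ∨ rowSum G x U = (U.card : ℝ) - 1
        then 1 else ((U.card : ℝ) - 1 - rowSum G x U) / |rowSum G d U|
      by_cases h : rowSum G d U = 0 ∨ ¬U.Nonempty ∨ rowSum G x U = (U.card : ℝ) - 1
      · rw [if_pos h]; norm_num
      · rw [if_neg h]
        push_neg at h
        obtain ⟨h1, h2, h3⟩ := h
        have hslack : rowSum G x U < (U.card : ℝ) - 1 :=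
          lt_of_le_of_ne (hxm.2 U h2) h3
        exact div_pos (by linarith) (abs_pos.mpr h1)
  have hmem : ∀ t : ℝ, |t| ≤ eps → x + t • d ∈ MWF G := by
    intro t ht
    constructor
    · intro e
      simp only [Pi.add_apply, Pi.smul_apply, smul_eq_mul]
      by_cases h : d e = 0
      · rw [h, mul_zero, add_zero]; exact hxm.1 e
      · have h1 : eps ≤ x e / |d e| := by
          calc eps ≤ Finset.univ.inf' hne1 f1 := min_le_left _ _
            _ ≤ f1 e := Finset.inf'_le f1 (Finset.mem_univ e)
            _ = x e / |d e| := by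
                show (if d e = 0 then 1 else x e / |d e|) = x e / |d e|
                rw [if_neg h]
        have h2 : |t * d e| ≤ x e := by
          rw [abs_mul]
          have := abs_pos.mpr h
          calc |t| * |d e| ≤ eps * |d e| := by nlinarith [abs_nonneg t]
            _ ≤ (x e / |d e|) * |d e| := by nlinarith
            _ = x e := by field_simp
        have := neg_abs_le (t * d e)
        linarith
    · intro U hU
      rw [rowSum_add, rowSum_smul]
      by_cases h : rowSum G d U = 0
      · rw [h, mul_zero, add_zero]; exact hxm.2 U hU
      · by_cases h3 : rowSum G x U = (U.card : ℝ) - 1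
        · exact absurd (hdt U hU h3) h
        · have h1 : eps ≤ ((U.card : ℝ) - 1 - rowSum G x U) / |rowSum G d U| := by
            calc eps ≤ Finset.univ.inf' hne2 f2 := min_le_right _ _
              _ ≤ f2 U := Finset.inf'_le f2 (Finset.mem_univ U)
              _ = ((U.card : ℝ) - 1 - rowSum G x U) / |rowSum G d U| := by
                  show (if rowSum G d U = 0 ∨ ¬U.Nonempty ∨ rowSum G x U = (U.card : ℝ) - 1
                    then 1 else ((U.card : ℝ) - 1 - rowSum G x U) / |rowSum G d U|) = _
                  rw [if_neg (by push_neg; exact ⟨h, hU, h3⟩)]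
          have habs := abs_pos.mpr h
          have h2 : |t * rowSum G d U| ≤ (U.card : ℝ) - 1 - rowSum G x U := by
            rw [abs_mul]
            calc |t| * |rowSum G d U| ≤ eps * |rowSum G d U| := by nlinarith [abs_nonneg t]
              _ ≤ (((U.card : ℝ) - 1 - rowSum G x U) / |rowSum G d U|) * |rowSum G d U| := by
                  nlinarith
              _ = _ := by field_simp
          have := le_abs_self (t * rowSum G d U)
          linarith
  have hplus : x + eps • d ∈ MWF G := hmem eps (by rw [abs_of_pos hepspos])
  have hminus : x + (-eps) • d ∈ MWF G := hmem (-eps) (by rw [abs_neg, abs_of_pos hepspos])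
  have hseg : x ∈ openSegment ℝ (x + (-eps) • d) (x + eps • d) := by
    refine ⟨1/2, 1/2, by norm_num, by norm_num, by norm_num, ?_⟩
    funext e
    simp only [Pi.add_apply, Pi.smul_apply, smul_eq_mul]
    ring
  have := (mem_extremePoints.mp hx).2 _ hminus _ hplus hseg
  have heq := this.2
  have : eps * d e0 = 0 := by
    have := congrFun heq e0
    simp only [Pi.add_apply, Pi.smul_apply, smul_eq_mul] at this
    linarith
  rcases mul_eq_zero.mp this with h | h
  · exact absurd h (ne_of_gt hepspos)
  · exact he0 h

lemma tight_inter {x : G.edgeSet → ℝ} (hx : x ∈ MWF G) {U W : Finset V}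
    (hU : U.Nonempty) (hW : W.Nonempty)
    (htU : rowSum G x U = (U.card : ℝ) - 1) (htW : rowSum G x W = (W.card : ℝ) - 1)
    (hUW : (U ∩ W).Nonempty) :
    rowSum G x (U ∩ W) = ((U ∩ W).card : ℝ) - 1 := by
  have hsum : rowSum G x U + rowSum G x W ≤ rowSum G x (U ∩ W) + rowSum G x (U ∪ W) := by
    unfold rowSum
    rw [← Finset.sum_add_distrib, ← Finset.sum_add_distrib]
    refine Finset.sum_le_sum fun e _ => ?_
    have hxe := hx.1 e
    by_cases h1 : ∀ v ∈ (e : Sym2 V), v ∈ U <;> by_cases h2 : ∀ v ∈ (e : Sym2 V), v ∈ W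
    · have hi : ∀ v ∈ (e : Sym2 V), v ∈ U ∩ W := fun v hv =>
        Finset.mem_inter.mpr ⟨h1 v hv, h2 v hv⟩
      have hu : ∀ v ∈ (e : Sym2 V), v ∈ U ∪ W := fun v hv =>
        Finset.mem_union_left W (h1 v hv)
      rw [if_pos h1, if_pos h2, if_pos hi, if_pos hu]
    · have hi : ¬ ∀ v ∈ (e : Sym2 V), v ∈ U ∩ W := fun h =>
        h2 (fun v hv => (Finset.mem_inter.mp (h v hv)).2)
      have hu : ∀ v ∈ (e : Sym2 V), v ∈ U ∪ W := fun v hv =>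
        Finset.mem_union_left W (h1 v hv)
      rw [if_pos h1, if_neg h2, if_neg hi, if_pos hu]
      linarith
    · have hi : ¬ ∀ v ∈ (e : Sym2 V), v ∈ U ∩ W := fun h =>
        h1 (fun v hv => (Finset.mem_inter.mp (h v hv)).1)
      have hu : ∀ v ∈ (e : Sym2 V), v ∈ U ∪ W := fun v hv =>
        Finset.mem_union_right U (h2 v hv)
      rw [if_neg h1, if_pos h2, if_neg hi, if_pos hu]
    · have hi : ¬ ∀ v ∈ (e : Sym2 V), v ∈ U ∩ W := fun h =>
        h1 (fun v hv => (Finset.mem_inter.mp (h v hv)).1)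
      rw [if_neg h1, if_neg h2, if_neg hi]
      split <;> linarith
  have hcup : rowSum G x (U ∪ W) ≤ ((U ∪ W).card : ℝ) - 1 :=
    hx.2 (U ∪ W) (hU.mono Finset.subset_union_left)
  have hcap : rowSum G x (U ∩ W) ≤ ((U ∩ W).card : ℝ) - 1 := hx.2 (U ∩ W) hUW
  have hcard : ((U ∩ W).card : ℝ) + ((U ∪ W).card : ℝ) = (U.card : ℝ) + (W.card : ℝ) := by
    have := Finset.card_inter_add_card_union U W
    exact_mod_cast this
  linarith

end Integrality
section Integrality2
variable {V : Type*} [Fintype V] [DecidableEq V] {G : SimpleGraph V} [DecidableRel G.Adj]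

lemma extreme_is_chi {x : G.edgeSet → ℝ} (hx : x ∈ Set.extremePoints ℝ (MWF G)) :
    ∃ F : Finset G.edgeSet, x = chiVec G F := by
  classical
  have hxm : x ∈ MWF G := hx.1
  by_cases hint : ∀ e, x e = 0 ∨ x e = 1
  · refine ⟨Finset.univ.filter (fun e => x e = 1), funext fun e => ?_⟩
    rcases hint e with h | h <;> simp [chiVec, Finset.mem_filter, h]
  · exfalso
    push_neg at hint
    obtain ⟨estar, hestar0, hestar1⟩ := hint
    have hfrac_estar : 0 < x estar ∧ x estar < 1 :=
      ⟨lt_of_le_of_ne (hxm.1 estar) (Ne.symm hestar0),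
        lt_of_le_of_ne (mem_MWF_le_one hxm estar) hestar1⟩
    set Tfr : Finset (Finset V) := Finset.univ.filter (fun U => U.Nonempty ∧
      rowSum G x U = (U.card : ℝ) - 1 ∧
      ∃ f : G.edgeSet, (∀ v ∈ (f : Sym2 V), v ∈ U) ∧ 0 < x f ∧ x f < 1) with hTfr
    rcases Tfr.eq_empty_or_nonempty with hT | hT
    · have hd := perturb hx (unitVec G estar) (fun e he => by
        unfold unitVec
        rw [if_neg]
        rintro rfl
        exact hestar0 he) (fun U hUne hUt => by
        rw [rowSum_unit, if_neg]
        intro hIn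
        have hmem : U ∈ Tfr := by
          rw [hTfr, Finset.mem_filter]
          exact ⟨Finset.mem_univ U, hUne, hUt, estar, hIn, hfrac_estar⟩
        rw [hT] at hmem
        exact absurd hmem (Finset.notMem_empty U))
      have := congrFun hd estar
      simp [unitVec] at this
    · obtain ⟨S, hSmem, hSmin⟩ := Tfr.exists_min_image Finset.card hT
      rw [hTfr, Finset.mem_filter] at hSmem
      obtain ⟨-, hSne, hSt, e1, he1S, he1f⟩ := hSmem
      have hsecond : ∃ f1 : G.edgeSet, f1 ≠ e1 ∧ (∀ v ∈ (f1 : Sym2 V), v ∈ S) ∧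
          0 < x f1 ∧ x f1 < 1 := by
        by_contra hno
        push_neg at hno
        have key : rowSum G x S = x e1 +
            (((Finset.univ.erase e1)).filter
              (fun f : G.edgeSet => (∀ v ∈ (f : Sym2 V), v ∈ S) ∧ x f = 1)).card := by
          unfold rowSum
          rw [← Finset.add_sum_erase _ _ (Finset.mem_univ e1), if_pos he1S]
          congr 1
          have hcongr : ∑ f ∈ Finset.univ.erase e1,
              (if (∀ v ∈ (f : Sym2 V), v ∈ S) then x f else 0) =
              ∑ f ∈ Finset.univ.erase e1,
              (if ((∀ v ∈ (f : Sym2 V), v ∈ S) ∧ x f = 1) then (1:ℝ) else 0) := by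
            refine Finset.sum_congr rfl (fun f hf => ?_)
            have hfe : f ≠ e1 := (Finset.mem_erase.mp hf).1
            by_cases hIn : ∀ v ∈ (f : Sym2 V), v ∈ S
            · have hf01 : x f = 0 ∨ x f = 1 := by
                by_cases h0 : x f = 0
                · exact Or.inl h0
                · have hpos : 0 < x f := lt_of_le_of_ne (hxm.1 f) (Ne.symm h0)
                  have := hno f hfe hIn hpos
                  exact Or.inr (le_antisymm (mem_MWF_le_one hxm f) this)
              rcases hf01 with h | h
              · rw [if_pos hIn, h, if_neg (by rintro ⟨-, h1⟩; norm_num at h1)]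
              · rw [if_pos hIn, h, if_pos ⟨hIn, rfl⟩]
            · rw [if_neg hIn, if_neg (fun hc => hIn hc.1)]
          rw [hcongr, Finset.sum_boole]
        set n2 := (((Finset.univ.erase e1)).filter
          (fun f : G.edgeSet => (∀ v ∈ (f : Sym2 V), v ∈ S) ∧ x f = 1)).card with hn2
        have hval : x e1 = ((S.card : ℤ) - 1 - (n2 : ℤ) : ℤ) := by
          push_cast
          rw [key] at hSt
          linarith
        have h0 : (0 : ℤ) < (S.card : ℤ) - 1 - (n2 : ℤ) := by
          have := he1f.1
          rw [hval] at this
          exact_mod_cast this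
        have h1 : ((S.card : ℤ) - 1 - (n2 : ℤ)) < 1 := by
          have := he1f.2
          rw [hval] at this
          exact_mod_cast this
        omega
      obtain ⟨f1, hf1ne, hf1S, hf1f⟩ := hsecond
      have hkey : ∀ (h : G.edgeSet), (∀ v ∈ (h : Sym2 V), v ∈ S) → 0 < x h → x h < 1 →
          ∀ U : Finset V, U.Nonempty → rowSum G x U = (U.card : ℝ) - 1 →
          (∀ v ∈ (h : Sym2 V), v ∈ U) → S ⊆ U := by
        intro h hhS hh0 hh1 U hUne hUt hhU
        have hIW : (U ∩ S).Nonempty := by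
          obtain ⟨a, b, hab, hrep⟩ := edge_repr h
          have ha : a ∈ (h : Sym2 V) := by rw [hrep]; exact Sym2.mem_mk_left a b
          exact ⟨a, Finset.mem_inter.mpr ⟨hhU a ha, hhS a ha⟩⟩
        have htight := tight_inter hxm hUne hSne hUt hSt hIW
        have hmemT : U ∩ S ∈ Tfr := by
          rw [hTfr, Finset.mem_filter]
          exact ⟨Finset.mem_univ _, hIW, htight, h,
            fun v hv => Finset.mem_inter.mpr ⟨hhU v hv, hhS v hv⟩, hh0, hh1⟩
        have hcard := hSmin _ hmemT
        have heq : U ∩ S = S :=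
          Finset.eq_of_subset_of_card_le Finset.inter_subset_right hcard
        intro v hv
        have hv2 : v ∈ U ∩ S := by rw [heq]; exact hv
        exact (Finset.mem_inter.mp hv2).1
      have hd := perturb hx (unitVec G e1 - unitVec G f1) (fun e he => by
        simp only [Pi.sub_apply, unitVec]
        have h1 : e ≠ e1 := by rintro rfl; exact absurd he (ne_of_gt he1f.1)
        have h2 : e ≠ f1 := by rintro rfl; exact absurd he (ne_of_gt hf1f.1)
        rw [if_neg h1, if_neg h2, sub_zero]) (fun U hUne hUt => by
        rw [rowSum_sub, rowSum_unit, rowSum_unit]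
        have hiff : (∀ v ∈ (e1 : Sym2 V), v ∈ U) ↔ (∀ v ∈ (f1 : Sym2 V), v ∈ U) := by
          constructor
          · intro h
            have hSU := hkey e1 he1S he1f.1 he1f.2 U hUne hUt h
            exact fun v hv => hSU (hf1S v hv)
          · intro h
            have hSU := hkey f1 hf1S hf1f.1 hf1f.2 U hUne hUt h
            exact fun v hv => hSU (he1S v hv)
        by_cases h : ∀ v ∈ (e1 : Sym2 V), v ∈ U
        · rw [if_pos h, if_pos (hiff.mp h)]; ring
        · rw [if_neg h, if_neg (fun h' => h (hiff.mpr h'))]; ring)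
      have := congrFun hd e1
      simp only [Pi.sub_apply, Pi.zero_apply, unitVec, if_pos rfl,
        if_neg (Ne.symm hf1ne)] at this
      norm_num at this

lemma extreme_is_chi' {x : G.edgeSet → ℝ} (hx : x ∈ Set.extremePoints ℝ (MWF G)) :
    ∃ F : Finset G.edgeSet, x = chiVec G F ∧ chiVec G F ∈ MWF G := by
  obtain ⟨F, hF⟩ := extreme_is_chi hx
  exact ⟨F, hF, hF ▸ hx.1⟩

end Integrality2
section Walks
variable {V : Type*} [Fintype V] [DecidableEq V] {G : SimpleGraph V} [DecidableRel G.Adj]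

def MWalk (G : SimpleGraph V) [DecidableRel G.Adj] (a b : G.edgeSet → ℝ) (n : ℕ) : Prop :=
  ∃ w : Fin (n + 1) → G.edgeSet → ℝ, w 0 = a ∧ w (Fin.last n) = b ∧ IsCircuitWalk G n w

lemma mwalk_refl {a : G.edgeSet → ℝ} (ha : a ∈ MWF G) : MWalk G a a 0 :=
  ⟨fun _ => a, rfl, rfl, fun _ => ha, fun i => i.elim0⟩

lemma mwalk_single {a b : G.edgeSet → ℝ} (ha : a ∈ MWF G) (hb : b ∈ MWF G)
    (hR : IsMaxStep G a b) : MWalk G a b 1 := by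
  refine ⟨fun i => if i = 0 then a else b, if_pos rfl, if_neg (by decide), fun i => ?_, fun i => ?_⟩
  · by_cases h : i = 0 <;> simp [h, ha, hb]
  · have hi : i = 0 := Subsingleton.elim i 0
    subst hi
    have h1 : Fin.castSucc (0 : Fin 1) = (0 : Fin 2) := rfl
    have h2 : Fin.succ (0 : Fin 1) = (1 : Fin 2) := rfl
    beta_reduce
    rw [h1, h2, if_pos rfl, if_neg (by decide)]
    exact hR

lemma mwalk_trans {a b c : G.edgeSet → ℝ} {m n : ℕ}
    (h1 : MWalk G a b m) (h2 : MWalk G b c n) : MWalk G a c (m + n) := by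
  obtain ⟨w1, h10, h1l, h1q, h1s⟩ := h1
  obtain ⟨w2, h20, h2l, h2q, h2s⟩ := h2
  classical
  refine ⟨fun i => if h : (i : ℕ) < m then w1 ⟨(i : ℕ), by omega⟩
    else w2 ⟨(i : ℕ) - m, by omega⟩, ?_, ?_, ?_, ?_⟩
  · beta_reduce
    by_cases h : 0 < m
    · rw [dif_pos (by simpa using h)]
      simpa using h10
    · have hm : m = 0 := by omega
      rw [dif_neg (by simp [hm])]
      have hba : b = a := by
        subst hm
        rw [← h10, ← h1l]
        congr 1
      rw [hba] at h20
      simpa using h20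
  · beta_reduce
    rw [dif_neg (by rw [Fin.val_last]; omega)]
    have e2 : (⟨((Fin.last (m+n) : Fin (m+n+1)) : ℕ) - m, by rw [Fin.val_last]; omega⟩ :
        Fin (n + 1)) = Fin.last n := Fin.ext (by simp only [Fin.val_mk, Fin.val_last]; omega)
    rw [e2]
    exact h2l
  · intro i
    beta_reduce
    by_cases h : (i : ℕ) < m
    · rw [dif_pos h]; exact h1q _
    · rw [dif_neg h]; exact h2q _
  · intro i
    beta_reduce
    have hic : ((i.castSucc : Fin (m+n+1)) : ℕ) = (i : ℕ) := rfl
    have his : ((i.succ : Fin (m+n+1)) : ℕ) = (i : ℕ) + 1 := rfl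
    by_cases hlt : (i : ℕ) < m
    · rw [dif_pos (by rw [hic]; exact hlt)]
      by_cases hlt2 : (i : ℕ) + 1 < m
      · rw [dif_pos (by rw [his]; exact hlt2)]
        have := h1s ⟨(i : ℕ), hlt⟩
        convert this using 2 <;> exact Fin.ext (by simp [Fin.castSucc, Fin.succ])
      · rw [dif_neg (by rw [his]; exact hlt2)]
        have hm : (i : ℕ) + 1 = m := by omega
        have := h1s ⟨(i : ℕ), hlt⟩
        have heqc : w1 (Fin.castSucc ⟨(i : ℕ), hlt⟩) = w1 ⟨((i.castSucc : Fin (m+n+1)) : ℕ), by omega⟩ :=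
          congrArg w1 (Fin.ext (by simp [Fin.castSucc]))
        have heqs : w1 (Fin.succ ⟨(i : ℕ), hlt⟩) = w2 ⟨((i.succ : Fin (m+n+1)) : ℕ) - m, by omega⟩ := by
          have e1 : Fin.succ (⟨(i : ℕ), hlt⟩ : Fin m) = Fin.last m := Fin.ext (by simp [Fin.last, hm])
          have e2 : (⟨((i.succ : Fin (m+n+1)) : ℕ) - m, by omega⟩ : Fin (n+1)) = 0 :=
            Fin.ext (by simp [his, hm])
          rw [e1, h1l, e2, h20]
        rw [← heqc, ← heqs]
        exact this
    · rw [dif_neg (by rw [hic]; exact hlt), dif_neg (by rw [his]; omega)]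
      have hin : (i : ℕ) - m < n := by
        have := i.isLt
        omega
      have := h2s ⟨(i : ℕ) - m, hin⟩
      have heqc : w2 (Fin.castSucc ⟨(i : ℕ) - m, hin⟩) =
          w2 ⟨((i.castSucc : Fin (m+n+1)) : ℕ) - m, by omega⟩ :=
        congrArg w2 (Fin.ext (by simp [Fin.castSucc, hic]))
      have heqs : w2 (Fin.succ ⟨(i : ℕ) - m, hin⟩) =
          w2 ⟨((i.succ : Fin (m+n+1)) : ℕ) - m, by omega⟩ :=
        congrArg w2 (Fin.ext (by simp [Fin.succ, his]; omega))
      rw [← heqc, ← heqs]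
      exact this

end Walks
section Build
variable {V : Type*} [Fintype V] [DecidableEq V] {G : SimpleGraph V} [DecidableRel G.Adj]

lemma buildUp : ∀ F : Finset G.edgeSet, chiVec G F ∈ MWF G →
    MWalk G 0 (chiVec G F) F.card := by
  classical
  intro F
  induction F using Finset.induction_on with
  | empty =>
    intro h
    rw [chiVec_empty, Finset.card_empty]
    exact mwalk_refl zero_mem_MWF
  | @insert a s hnot ih =>
    intro hF
    have hs : chiVec G s ∈ MWF G := chiVec_mono_mem (Finset.subset_insert a s) hF
    have step := mwalk_single hs hF (step_add s a hnot).toMaxStep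
    have := mwalk_trans (ih hs) step
    rwa [Finset.card_insert_of_notMem hnot]

lemma buildDown : ∀ F : Finset G.edgeSet, chiVec G F ∈ MWF G →
    MWalk G (chiVec G F) 0 F.card := by
  classical
  intro F
  induction F using Finset.induction_on with
  | empty =>
    intro h
    rw [chiVec_empty, Finset.card_empty]
    exact mwalk_refl zero_mem_MWF
  | @insert a s hnot ih =>
    intro hF
    have hs : chiVec G s ∈ MWF G := chiVec_mono_mem (Finset.subset_insert a s) hF
    have step := mwalk_single hF hs (rev_add s a hnot)
    have := mwalk_trans step (ih hs)
    rwa [Finset.card_insert_of_notMem hnot, Nat.add_comm]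

lemma exists_S1S2 (F : Finset G.edgeSet) (hF : chiVec G F ∈ MWF G) (e : G.edgeSet)
    (heF : e ∈ F) : ∃ S1 S2 : Finset G.edgeSet,
    S1 ∪ S2 = F.erase e ∧ e ∉ S1 ∧ e ∉ S2 ∧ (∀ f ∈ S2, f ∉ S1) ∧
    S1 ⊆ F ∧ S2 ⊆ F ∧
    (∀ f ∈ S1, ∃ U : Finset V, (∀ v ∈ (e : Sym2 V), v ∈ U) ∧
      (∀ f' ∈ S1, (∀ v ∈ (f' : Sym2 V), v ∈ U) ↔ f' = f)) ∧
    (∀ f ∈ S2, ∃ U : Finset V, (∀ v ∈ (e : Sym2 V), v ∈ U) ∧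
      (∀ f' ∈ S2, (∀ v ∈ (f' : Sym2 V), v ∈ U) ↔ f' = f)) := by
  classical
  refine ⟨(F.erase e).filter (fun f => ∃ p, p ∈ (f : Sym2 V) ∧ p ∈ (e : Sym2 V)),
    (F.erase e).filter (fun f => ¬ ∃ p, p ∈ (f : Sym2 V) ∧ p ∈ (e : Sym2 V)),
    Finset.filter_union_filter_not_eq _ _, ?_, ?_, ?_, ?_, ?_, ?_, ?_⟩
  · intro h
    exact (Finset.mem_erase.mp (Finset.mem_filter.mp h).1).1 rfl
  · intro h
    exact (Finset.mem_erase.mp (Finset.mem_filter.mp h).1).1 rfl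
  · intro f hf hf1
    exact (Finset.mem_filter.mp hf).2 (Finset.mem_filter.mp hf1).2
  · exact (Finset.filter_subset _ _).trans (Finset.erase_subset _ _)
  · exact (Finset.filter_subset _ _).trans (Finset.erase_subset _ _)
  · refine H_adjacent hF e heF _ (fun f hf => ?_)
    have h1 := Finset.mem_filter.mp hf
    exact ⟨(Finset.mem_erase.mp h1.1).2, (Finset.mem_erase.mp h1.1).1, h1.2⟩
  · exact H_disjoint e _ (fun f hf => (Finset.mem_filter.mp hf).2)

lemma fastUp (F : Finset G.edgeSet) (hF : chiVec G F ∈ MWF G) (e : G.edgeSet)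
    (heF : e ∈ F) : MWalk G (chiVec G (insert e ∅)) (chiVec G F) 4 := by
  obtain ⟨S1, S2, hunion, heS1, heS2, hd21, hS1F, hS2F, hH1, hH2⟩ := exists_S1S2 F hF e heF
  have m1 : chiVec G (insert e ∅) ∈ MWF G :=
    chiVec_mono_mem (by intro f hf; simp only [Finset.mem_insert,
      Finset.notMem_empty, or_false] at hf; rw [hf]; exact heF) hF
  have m2 : chiVec G S1 ∈ MWF G := chiVec_mono_mem hS1F hF
  have m3 : chiVec G (insert e S1) ∈ MWF G := chiVec_mono_mem (by
    intro f hf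
    rcases Finset.mem_insert.mp hf with rfl | hf
    exacts [heF, hS1F hf]) hF
  have m4 : chiVec G (F.erase e) ∈ MWF G := chiVec_mono_mem (Finset.erase_subset _ _) hF
  have s1 : IsMaxStep G (chiVec G (insert e ∅)) (chiVec G S1) := by
    have := (step_exchange e ∅ S1 (Finset.notMem_empty e) heS1
      (fun f _ => Finset.notMem_empty f) hH1).toMaxStep
    rwa [Finset.empty_union] at this
  have s2 : IsMaxStep G (chiVec G S1) (chiVec G (insert e S1)) :=
    (step_add S1 e heS1).toMaxStep
  have s3 : IsMaxStep G (chiVec G (insert e S1)) (chiVec G (F.erase e)) := by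
    have := (step_exchange e S1 S2 heS1 heS2 hd21 hH2).toMaxStep
    rwa [hunion] at this
  have s4 : IsMaxStep G (chiVec G (F.erase e)) (chiVec G F) := by
    have := (step_add (F.erase e) e (Finset.notMem_erase e F)).toMaxStep
    rwa [Finset.insert_erase heF] at this
  have hw := mwalk_trans (mwalk_trans (mwalk_trans (mwalk_single m1 m2 s1)
    (mwalk_single m2 m3 s2)) (mwalk_single m3 m4 s3)) (mwalk_single m4 hF s4)
  exact hw

lemma fastDown (F : Finset G.edgeSet) (hF : chiVec G F ∈ MWF G) (e : G.edgeSet)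
    (heF : e ∈ F) : MWalk G (chiVec G F) (chiVec G (insert e ∅)) 4 := by
  obtain ⟨S1, S2, hunion, heS1, heS2, hd21, hS1F, hS2F, hH1, hH2⟩ := exists_S1S2 F hF e heF
  have m1 : chiVec G (insert e ∅) ∈ MWF G :=
    chiVec_mono_mem (by intro f hf; simp only [Finset.mem_insert,
      Finset.notMem_empty, or_false] at hf; rw [hf]; exact heF) hF
  have m2 : chiVec G S1 ∈ MWF G := chiVec_mono_mem hS1F hF
  have m3 : chiVec G (insert e S1) ∈ MWF G := chiVec_mono_mem (by
    intro f hf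
    rcases Finset.mem_insert.mp hf with rfl | hf
    exacts [heF, hS1F hf]) hF
  have m4 : chiVec G (F.erase e) ∈ MWF G := chiVec_mono_mem (Finset.erase_subset _ _) hF
  have s4 : IsMaxStep G (chiVec G F) (chiVec G (F.erase e)) := by
    have := rev_add (F.erase e) e (Finset.notMem_erase e F)
    rwa [Finset.insert_erase heF] at this
  have s3 : IsMaxStep G (chiVec G (F.erase e)) (chiVec G (insert e S1)) := by
    have := rev_exchange e S1 S2 heS1 heS2 hd21 hH2
    rwa [hunion] at this
  have s2 : IsMaxStep G (chiVec G (insert e S1)) (chiVec G S1) := rev_add S1 e heS1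
  have s1 : IsMaxStep G (chiVec G S1) (chiVec G (insert e ∅)) := by
    have := rev_exchange e ∅ S1 (Finset.notMem_empty e) heS1
      (fun f _ => Finset.notMem_empty f) hH1
    rwa [Finset.empty_union] at this
  exact mwalk_trans (mwalk_trans (mwalk_trans (mwalk_single hF m4 s4)
    (mwalk_single m4 m3 s3)) (mwalk_single m3 m2 s2)) (mwalk_single m2 m1 s1)

end Build

/-- Every extreme point of the maximum weight forest polytope corresponding to a forest
`F` is reachable from the zero vector by a circuit walk of at most 5 maximal steps along
0/±1 circuits, all of whose points are extreme points; consequently the circuit diameter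
of the polytope is at most 9, and at most 6 when the graph has at most 4 vertices. -/
theorem stmt17 {V : Type*} [Fintype V] [DecidableEq V] (G : SimpleGraph V)
    [DecidableRel G.Adj] :
    (∀ F : Finset G.edgeSet, (edgeSub G (↑F : Set G.edgeSet)).IsAcyclic →
      chiVec G F ∈ Set.extremePoints ℝ (MWF G) →
      ∃ (k : ℕ) (x : Fin (k + 1) → G.edgeSet → ℝ), k ≤ 5 ∧
        x 0 = 0 ∧ x (Fin.last k) = chiVec G F ∧
        (∀ i, x i ∈ Set.extremePoints ℝ (MWF G)) ∧
        (∀ i : Fin k, IsMaxStep01 G (x i.castSucc) (x i.succ))) ∧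
    (∀ x y : G.edgeSet → ℝ, x ∈ Set.extremePoints ℝ (MWF G) →
      y ∈ Set.extremePoints ℝ (MWF G) →
      ∃ (k : ℕ) (w : Fin (k + 1) → G.edgeSet → ℝ), k ≤ 9 ∧
        w 0 = x ∧ w (Fin.last k) = y ∧ IsCircuitWalk G k w) ∧
    (Fintype.card V ≤ 4 →
      ∀ x y : G.edgeSet → ℝ, x ∈ Set.extremePoints ℝ (MWF G) →
        y ∈ Set.extremePoints ℝ (MWF G) →
        ∃ (k : ℕ) (w : Fin (k + 1) → G.edgeSet → ℝ), k ≤ 6 ∧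
          w 0 = x ∧ w (Fin.last k) = y ∧ IsCircuitWalk G k w) := by
  classical
  have conv : ∀ (a b : G.edgeSet → ℝ) (k bound : ℕ), k ≤ bound → MWalk G a b k →
      ∃ (k' : ℕ) (w : Fin (k' + 1) → G.edgeSet → ℝ), k' ≤ bound ∧
        w 0 = a ∧ w (Fin.last k') = b ∧ IsCircuitWalk G k' w := by
    rintro a b k bound hk ⟨w, h0, hl, hw⟩
    exact ⟨k, w, hk, h0, hl, hw⟩
  refine ⟨?_, ?_, ?_⟩
  · -- part 1
    intro F _hacyc hext
    have hF : chiVec G F ∈ MWF G := hext.1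
    rcases F.eq_empty_or_nonempty with rfl | ⟨e, heF⟩
    · refine ⟨0, fun _ => chiVec G (∅ : Finset G.edgeSet), by norm_num,
        chiVec_empty, rfl, fun i => chiVec_extreme hF, fun i => i.elim0⟩
    · obtain ⟨S1, S2, hunion, heS1, heS2, hd21, hS1F, hS2F, hH1, hH2⟩ :=
        exists_S1S2 F hF e heF
      have m0 : (0 : G.edgeSet → ℝ) ∈ Set.extremePoints ℝ (MWF G) := by
        rw [← chiVec_empty]
        exact chiVec_extreme (chiVec_mono_mem (Finset.empty_subset F) hF)
      have m1 : chiVec G (insert e ∅) ∈ MWF G :=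
        chiVec_mono_mem (by
          intro f hf
          simp only [Finset.mem_insert, Finset.notMem_empty, or_false] at hf
          rw [hf]; exact heF) hF
      have m2 : chiVec G S1 ∈ MWF G := chiVec_mono_mem hS1F hF
      have m3 : chiVec G (insert e S1) ∈ MWF G := chiVec_mono_mem (by
        intro f hf
        rcases Finset.mem_insert.mp hf with rfl | hf
        exacts [heF, hS1F hf]) hF
      have m4 : chiVec G (F.erase e) ∈ MWF G :=
        chiVec_mono_mem (Finset.erase_subset _ _) hF
      refine ⟨5, ![0, chiVec G (insert e ∅), chiVec G S1, chiVec G (insert e S1),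
        chiVec G (F.erase e), chiVec G F], by norm_num, rfl, rfl, ?_, ?_⟩
      · intro i
        fin_cases i
        · exact m0
        · exact chiVec_extreme m1
        · exact chiVec_extreme m2
        · exact chiVec_extreme m3
        · exact chiVec_extreme m4
        · exact chiVec_extreme hF
      · intro i
        fin_cases i
        · have := step_add (∅ : Finset G.edgeSet) e (Finset.notMem_empty e)
          rw [chiVec_empty] at this
          exact this
        · have := step_exchange e ∅ S1 (Finset.notMem_empty e) heS1
            (fun f _ => Finset.notMem_empty f) hH1
          rwa [Finset.empty_union] at this
        · exact step_add S1 e heS1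
        · have := step_exchange e S1 S2 heS1 heS2 hd21 hH2
          rwa [hunion] at this
        · have := step_add (F.erase e) e (Finset.notMem_erase e F)
          rwa [Finset.insert_erase heF] at this
  · -- part 2
    intro x y hx hy
    obtain ⟨Fx, rfl⟩ := extreme_is_chi hx
    obtain ⟨Fy, rfl⟩ := extreme_is_chi hy
    have hFx : chiVec G Fx ∈ MWF G := hx.1
    have hFy : chiVec G Fy ∈ MWF G := hy.1
    rcases Fx.eq_empty_or_nonempty with rfl | ⟨ex, hex⟩
    · rcases Fy.eq_empty_or_nonempty with rfl | ⟨ey, hey⟩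
      · exact conv _ _ 0 9 (by norm_num) (mwalk_refl hFx)
      · have mey : chiVec G (insert ey ∅) ∈ MWF G :=
          chiVec_mono_mem (by
            intro f hf
            simp only [Finset.mem_insert, Finset.notMem_empty, or_false] at hf
            rw [hf]; exact hey) hFy
        have s : IsMaxStep G (chiVec G (∅ : Finset G.edgeSet)) (chiVec G (insert ey ∅)) := by
          have := (step_add (∅ : Finset G.edgeSet) ey (Finset.notMem_empty ey)).toMaxStep
          exact this
        exact conv _ _ 5 9 (by norm_num)
          (mwalk_trans (mwalk_single hFx mey s) (fastUp Fy hFy ey hey))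
    · have mex : chiVec G (insert ex ∅) ∈ MWF G :=
        chiVec_mono_mem (by
          intro f hf
          simp only [Finset.mem_insert, Finset.notMem_empty, or_false] at hf
          rw [hf]; exact hex) hFx
      rcases Fy.eq_empty_or_nonempty with rfl | ⟨ey, hey⟩
      · have s : IsMaxStep G (chiVec G (insert ex ∅)) (chiVec G (∅ : Finset G.edgeSet)) :=
          rev_add (∅ : Finset G.edgeSet) ex (Finset.notMem_empty ex)
        exact conv _ _ 5 9 (by norm_num)
          (mwalk_trans (fastDown Fx hFx ex hex) (mwalk_single mex hFy s))
      · have mey : chiVec G (insert ey ∅) ∈ MWF G :=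
          chiVec_mono_mem (by
            intro f hf
            simp only [Finset.mem_insert, Finset.notMem_empty, or_false] at hf
            rw [hf]; exact hey) hFy
        by_cases hxy : ex = ey
        · subst hxy
          exact conv _ _ 8 9 (by norm_num)
            (mwalk_trans (fastDown Fx hFx ex hex) (fastUp Fy hFy ex hey))
        · have s : IsMaxStep G (chiVec G (insert ex ∅)) (chiVec G (insert ey ∅)) := by
            have := (step_exchange ex ∅ (insert ey ∅) (Finset.notMem_empty ex)
              (by simp [hxy]) (fun f _ => Finset.notMem_empty f)
              (H_singleton ex ey)).toMaxStep
            rwa [Finset.empty_union] at this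
          exact conv _ _ 9 9 (by norm_num)
            (mwalk_trans (mwalk_trans (fastDown Fx hFx ex hex)
              (mwalk_single mex mey s)) (fastUp Fy hFy ey hey))
  · -- part 3
    intro hV x y hx hy
    obtain ⟨Fx, rfl⟩ := extreme_is_chi hx
    obtain ⟨Fy, rfl⟩ := extreme_is_chi hy
    have hFx : chiVec G Fx ∈ MWF G := hx.1
    have hFy : chiVec G Fy ∈ MWF G := hy.1
    have hb : ∀ F : Finset G.edgeSet, chiVec G F ∈ MWF G → F.card ≤ 3 := by
      intro F hF
      rcases F.eq_empty_or_nonempty with rfl | ⟨e, he⟩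
      · simp
      · obtain ⟨u, v, hadj, hrep⟩ := edge_repr e
        have h1 := hF.2 Finset.univ ⟨u, Finset.mem_univ u⟩
        have h2 : rowSum G (chiVec G F) Finset.univ = (F.card : ℝ) := by
          rw [rowSum_chi,
            Finset.sum_congr rfl (fun f _ => if_pos (fun z _ => Finset.mem_univ z))]
          simp
        rw [h2, Finset.card_univ] at h1
        have h3 : (Fintype.card V : ℝ) ≤ 4 := by exact_mod_cast hV
        have h4 : (F.card : ℝ) ≤ 3 := by linarith
        exact_mod_cast h4
    refine conv _ _ (Fx.card + Fy.card) 6 ?_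
      (mwalk_trans (buildDown Fx hFx) (buildUp Fy hFy))
    have := hb Fx hFx
    have := hb Fy hFy
    omega
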